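/- For every integer k ≥ 4, there exists a finite simple graph Bot together with a vertex b of Bot such that: (1) for every k-leaf root T of Bot, m_T(b) ≤ k−1; and (2) there exists a k-leaf root T of Bot with m_T(b) = k−1. -/

import Mathlib

open SimpleGraph

/-- A vertex of a graph is a leaf if it has exactly one neighbor. -/
def IsLeafVert {W : Type} (T : SimpleGraph W) (w : W) : Prop := ∃! u, T.Adj w u

/-- `T` (a finite tree on vertex type `W`) together with the injection `f` of the
vertices of `G` onto the leaves of `T` is a `k`-leaf root of `G`:  the leaves of `T`
are exactly the image of `f`, and two distinct vertices of `G` are adjacent iff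
their distance in `T` is at most `k`. -/
def IsLeafRoot {V W : Type} (G : SimpleGraph V) (k : ℕ)
    (T : SimpleGraph W) (f : V → W) : Prop :=
  Finite W ∧ T.IsTree ∧ Function.Injective f ∧
    (∀ w : W, (∃ v, f v = w) ↔ IsLeafVert T w) ∧
    (∀ u v : V, u ≠ v → (G.Adj u v ↔ T.dist (f u) (f v) ≤ k))

/-- `G` is a `k`-leaf power: it admits a `k`-leaf root. -/
def IsKLeafPower {V : Type} (G : SimpleGraph V) (k : ℕ) : Prop :=
  ∃ (W : Type) (T : SimpleGraph W) (f : V → W), IsLeafRoot G k T f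

/-- `m_T(v)`: the minimum over all `u ≠ v` of the distance in the leaf root `T`
between the leaves corresponding to `u` and `v`. -/
noncomputable def mval {V W : Type} (T : SimpleGraph W) (f : V → W) (v : V) : ℕ :=
  sInf {d | ∃ u, u ≠ v ∧ T.dist (f u) (f v) = d}

/-- A vertex has degree at least three. -/
def HasDegreeGEThree {W : Type} (T : SimpleGraph W) (w : W) : Prop :=
  ∃ a b c : W, a ≠ b ∧ a ≠ c ∧ b ≠ c ∧ T.Adj w a ∧ T.Adj w b ∧ T.Adj w c

/-- A spine of a tree: a path containing every vertex of degree at least 3.  A tree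
having a spine is exactly a caterpillar subdivision. -/
def IsSpine {W : Type} (T : SimpleGraph W) {a b : W} (p : T.Walk a b) : Prop :=
  p.IsPath ∧ ∀ w : W, HasDegreeGEThree T w → w ∈ p.support

/-- A linear `k`-leaf root: a `k`-leaf root whose tree is a caterpillar subdivision. -/
def IsLinearLeafRoot {V W : Type} (G : SimpleGraph V) (k : ℕ)
    (T : SimpleGraph W) (f : V → W) : Prop :=
  IsLeafRoot G k T f ∧ ∃ (a b : W) (p : T.Walk a b), IsSpine T p

/-- `G` is a linear `k`-leaf power: it admits a linear `k`-leaf root. -/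
def IsLinearKLeafPower {V : Type} (G : SimpleGraph V) (k : ℕ) : Prop :=
  ∃ (W : Type) (T : SimpleGraph W) (f : V → W), IsLinearLeafRoot G k T f

/-- A cycle of length `n` in `G`, given as an injective map from `ZMod n` with
consecutive images adjacent. -/
def IsCycleIn {V : Type} (G : SimpleGraph V) (n : ℕ) (f : ZMod n → V) : Prop :=
  Function.Injective f ∧ ∀ i : ZMod n, G.Adj (f i) (f (i + 1))

/-- `G` is chordal: every cycle of length at least 4 has a chord. -/
def Chordal {V : Type} (G : SimpleGraph V) : Prop :=
  ∀ n : ℕ, 4 ≤ n → ∀ f : ZMod n → V, IsCycleIn G n f →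
    ∃ i j : ZMod n, j ≠ i ∧ j ≠ i + 1 ∧ j ≠ i - 1 ∧ G.Adj (f i) (f j)

/-- `G` is strongly chordal: chordal, and every even cycle of length at least 6 has
an odd chord (a chord joining two vertices an odd distance apart along the cycle). -/
def StronglyChordal {V : Type} (G : SimpleGraph V) : Prop :=
  Chordal G ∧ ∀ n : ℕ, 6 ≤ n → Even n → ∀ f : ZMod n → V, IsCycleIn G n f →
    ∃ i j : ZMod n, Odd ((j - i).val) ∧ j ≠ i + 1 ∧ j ≠ i - 1 ∧ G.Adj (f i) (f j)


namespace LeafAux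

variable {X : Type} [DecidableEq X] {T : SimpleGraph X}

lemma path_length_eq_dist (hT : T.IsTree) {a b : X} (p : T.Walk a b) (hp : p.IsPath) :
    p.length = T.dist a b := by
  obtain ⟨q, hq, hlen⟩ := hT.isConnected.exists_path_of_dist a b
  have hpq : p = q := congrArg Subtype.val (hT.IsAcyclic.path_unique ⟨p, hp⟩ ⟨q, hq⟩)
  rw [hpq]; exact hlen

lemma dist_split (hT : T.IsTree) {a b m : X} (p : T.Walk a b) (hp : p.IsPath)
    (hm : m ∈ p.support) : T.dist a m + T.dist m b = T.dist a b := by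
  have h1 := path_length_eq_dist hT (p.takeUntil m hm) (hp.takeUntil hm)
  have h2 := path_length_eq_dist hT (p.dropUntil m hm) (hp.dropUntil hm)
  have h3 := path_length_eq_dist hT p hp
  have h4 := congrArg SimpleGraph.Walk.length (p.take_spec hm)
  rw [SimpleGraph.Walk.length_append] at h4
  omega

/-- first vertex of a walk lying in a set -/
lemma exists_first_mem : ∀ {a b : X} (q : T.Walk a b) (S : Set X), b ∈ S →
    ∃ (m : X) (q1 : T.Walk a m) (q2 : T.Walk m b), m ∈ S ∧ q1.append q2 = q ∧
      ∀ y ∈ q1.support, y ∈ S → y = m := by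
  intro a b q
  induction q with
  | nil =>
    intro S hb
    exact ⟨_, .nil, .nil, hb, rfl, by simp⟩
  | @cons u v w h p ih =>
    intro S hb
    by_cases hu : u ∈ S
    · refine ⟨u, .nil, .cons h p, hu, rfl, ?_⟩
      simp
    · obtain ⟨m, q1, q2, hm, heq, hforall⟩ := ih S hb
      refine ⟨m, .cons h q1, q2, hm, by rw [SimpleGraph.Walk.cons_append, heq], ?_⟩
      intro y hy hyS
      rw [SimpleGraph.Walk.support_cons, List.mem_cons] at hy
      rcases hy with rfl | hy
      · exact absurd hyS hu
      · exact hforall y hy hyS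

lemma isPath_append {a m b : X} {p : T.Walk a m} {q : T.Walk m b}
    (hp : p.IsPath) (hq : q.IsPath)
    (hdisj : ∀ y, y ∈ p.support → y ∈ q.support → y = m) :
    (p.append q).IsPath := by
  rw [SimpleGraph.Walk.isPath_def, SimpleGraph.Walk.support_append]
  apply List.Nodup.append hp.support_nodup
  · have := hq.support_nodup
    rw [q.support_eq_cons] at this
    exact this.of_cons
  · intro y hy hy'
    have hyq : y ∈ q.support := by
      rw [q.support_eq_cons]; exact List.mem_cons_of_mem _ hy'
    have : y = m := hdisj y hy hyq
    subst this
    have := hq.support_nodup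
    rw [q.support_eq_cons] at this
    exact (List.nodup_cons.mp this).1 hy'

/-- median: for any vertex `a` and any path `p` from `b` to `c` in a tree,
there is `m` on `p` splitting distances from `a` to both endpoints. -/
lemma exists_median (hT : T.IsTree) (a : X) {b c : X} (p : T.Walk b c) (hp : p.IsPath) :
    ∃ m ∈ p.support, T.dist a m + T.dist m b = T.dist a b ∧
      T.dist a m + T.dist m c = T.dist a c := by
  obtain ⟨q0⟩ := hT.isConnected a b
  let q := q0.toPath
  have hq : (q : T.Walk a b).IsPath := q.isPath
  obtain ⟨m, q1, q2, hm, heq, hfst⟩ := exists_first_mem (q : T.Walk a b)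
    {y | y ∈ p.support} (p.start_mem_support)
  have hq1 : q1.IsPath := by
    apply SimpleGraph.Walk.IsPath.of_append_left (q := q2); rw [heq]; exact hq
  refine ⟨m, hm, ?_, ?_⟩
  · -- split of dist a b at m, since m on the path q
    have hmq : m ∈ (q : T.Walk a b).support := by
      rw [← heq, SimpleGraph.Walk.mem_support_append_iff]
      left; exact q1.end_mem_support
    exact dist_split hT _ hq hmq
  · -- path a→m followed by m→c along p
    have hdrop : (p.dropUntil m hm).IsPath := hp.dropUntil hm
    have hdisj : ∀ y, y ∈ q1.support → y ∈ (p.dropUntil m hm).support → y = m := by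
      intro y hy hy'
      exact hfst y hy (SimpleGraph.Walk.support_dropUntil_subset p hm hy')
    have hpath := isPath_append hq1 hdrop hdisj
    have hlen := path_length_eq_dist hT _ hpath
    rw [SimpleGraph.Walk.length_append] at hlen
    have l1 : q1.length = T.dist a m := path_length_eq_dist hT q1 hq1
    have l2 : (p.dropUntil m hm).length = T.dist m c := path_length_eq_dist hT _ hdrop
    omega

lemma between (hT : T.IsTree) {b c m m' : X} (p : T.Walk b c) (hp : p.IsPath)
    (hm : m ∈ p.support) (hm' : m' ∈ p.support) :
    T.dist b m + T.dist m m' = T.dist b m' ∨ T.dist b m' + T.dist m' m = T.dist b m := by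
  have hsplit := p.take_spec hm'
  have : m ∈ (p.takeUntil m' hm').support ∨ m ∈ (p.dropUntil m' hm').support := by
    rw [← SimpleGraph.Walk.mem_support_append_iff, hsplit]; exact hm
  rcases this with h | h
  · left; exact dist_split hT _ (hp.takeUntil hm') h
  · right
    have e1 := dist_split hT _ (hp.dropUntil hm') h
    have e2 := dist_split hT p hp hm
    have e3 := dist_split hT p hp hm'
    omega

lemma four_point (hT : T.IsTree) (p q r s : X) :
    T.dist p q + T.dist r s ≤
      max (T.dist p r + T.dist q s) (T.dist p s + T.dist q r) := by
  obtain ⟨P0⟩ := hT.isConnected r s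
  let P := P0.toPath
  have hP : (P : T.Walk r s).IsPath := P.isPath
  obtain ⟨m, hm, hm1, hm2⟩ := exists_median hT p (P : T.Walk r s) hP
  obtain ⟨m', hm', hm'1, hm'2⟩ := exists_median hT q (P : T.Walk r s) hP
  have hsplitm := dist_split hT _ hP hm
  have hsplitm' := dist_split hT _ hP hm'
  have htri1 : T.dist p q ≤ T.dist p m + T.dist m q :=
    hT.isConnected.dist_triangle
  have htri2 : T.dist m q ≤ T.dist m m' + T.dist m' q :=
    hT.isConnected.dist_triangle
  have hc1 : T.dist m q = T.dist q m := T.dist_comm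
  have hc2 : T.dist m' q = T.dist q m' := T.dist_comm
  have hc3 : T.dist m r = T.dist r m := T.dist_comm
  have hc4 : T.dist m' r = T.dist r m' := T.dist_comm
  have hc5 : T.dist m' m = T.dist m m' := T.dist_comm
  have hbet := between hT (P : T.Walk r s) hP hm hm'
  rcases hbet with h | h
  · apply le_max_of_le_right
    omega
  · apply le_max_of_le_left
    omega

end LeafAux


namespace LeafAux
def BotG : SimpleGraph (Fin 4) where
  Adj u v := u ≠ v ∧ ¬(u = 2 ∧ v = 3) ∧ ¬(u = 3 ∧ v = 2)
  symm := ⟨fun a b h => ⟨Ne.symm h.1, fun hc => h.2.2 ⟨hc.2, hc.1⟩, fun hc => h.2.1 ⟨hc.2, hc.1⟩⟩⟩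
  loopless := ⟨fun a h => h.1 rfl⟩

lemma botAdj (u v : Fin 4) (h1 : u ≠ v) (h2 : ¬(u = 2 ∧ v = 3)) (h3 : ¬(u = 3 ∧ v = 2)) :
    BotG.Adj u v := ⟨h1, h2, h3⟩

lemma botNotAdj23 : ¬ BotG.Adj 2 3 := fun h => h.2.1 ⟨rfl, rfl⟩

lemma part1 (k : ℕ) (hk : 4 ≤ k) (W : Type) (T : SimpleGraph W) (f : Fin 4 → W)
    (h : IsLeafRoot BotG k T f) : mval T f 0 ≤ k - 1 := by
  classical
  obtain ⟨hfin, hT, hinj, hleaf, hadj⟩ := h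
  have e12 : T.dist (f 1) (f 2) ≤ k := (hadj 1 2 (by decide)).1 (botAdj _ _ (by decide) (by decide) (by decide))
  have e03 : T.dist (f 0) (f 3) ≤ k := (hadj 0 3 (by decide)).1 (botAdj _ _ (by decide) (by decide) (by decide))
  have e13 : T.dist (f 1) (f 3) ≤ k := (hadj 1 3 (by decide)).1 (botAdj _ _ (by decide) (by decide) (by decide))
  have e02 : T.dist (f 0) (f 2) ≤ k := (hadj 0 2 (by decide)).1 (botAdj _ _ (by decide) (by decide) (by decide))
  have n23 : ¬ T.dist (f 2) (f 3) ≤ k := by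
    intro hle
    have : BotG.Adj 2 3 := (hadj 2 3 (by decide)).2 hle
    exact botNotAdj23 this
  have hfp := four_point hT (f 1) (f 0) (f 2) (f 3)
  have h10 : T.dist (f 1) (f 0) ≤ k - 1 := by
    rcases max_cases (T.dist (f 1) (f 2) + T.dist (f 0) (f 3))
      (T.dist (f 1) (f 3) + T.dist (f 0) (f 2)) with ⟨heq, _⟩ | ⟨heq, _⟩ <;>
      rw [heq] at hfp <;> omega
  calc mval T f 0 ≤ T.dist (f 1) (f 0) := Nat.sInf_le ⟨1, by decide, rfl⟩
    _ ≤ k - 1 := h10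

end LeafAux

namespace Cater

/-- general: a graph with a rank function where each vertex has at most one
lower-ranked neighbor and no equal-rank neighbors is acyclic. -/
lemma acyclic_of_rank {V : Type} [DecidableEq V] (G : SimpleGraph V) (rk : V → ℕ)
    (hne : ∀ u v, G.Adj u v → rk u ≠ rk v)
    (huniq : ∀ u v w, G.Adj u v → G.Adj u w → rk v < rk u → rk w < rk u → v = w) :
    G.IsAcyclic := by
  have key : ∀ (w : V) (c : G.Walk w w), c.IsCycle →
      (∀ y ∈ c.support, rk y ≤ rk w) → False := by
    intro w c hc hmax
    cases c with
    | nil => exact hc.not_of_nil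
    | @cons _ b _ h p =>
      cases hrev : p.reverse with
      | nil =>
        have : p.length = 0 := by
          have := congrArg SimpleGraph.Walk.length hrev
          simpa using this
        have h3 := hc.three_le_length
        simp [SimpleGraph.Walk.length_cons] at h3
        omega
      | @cons _ d _ h2 q =>
        -- h : G.Adj w b, h2 : G.Adj w d
        have hbmem : b ∈ (SimpleGraph.Walk.cons h p).support := by
          rw [SimpleGraph.Walk.support_cons]
          exact List.mem_cons_of_mem _ p.start_mem_support
        have hdmem : d ∈ (SimpleGraph.Walk.cons h p).support := by
          rw [SimpleGraph.Walk.support_cons]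
          apply List.mem_cons_of_mem
          have : d ∈ p.reverse.support := by
            rw [hrev, SimpleGraph.Walk.support_cons]
            exact List.mem_cons_of_mem _ q.start_mem_support
          rwa [SimpleGraph.Walk.support_reverse, List.mem_reverse] at this
        have hrkb : rk b < rk w :=
          lt_of_le_of_ne (hmax b hbmem) (fun hh => hne w b h hh.symm)
        have hrkd : rk d < rk w :=
          lt_of_le_of_ne (hmax d hdmem) (fun hh => hne w d h2 hh.symm)
        have hbd : b = d := huniq w b d h h2 hrkb hrkd
        -- then the first edge equals the last edge, contradicting trail
        subst hbd
        have hnodup := hc.edges_nodup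
        rw [SimpleGraph.Walk.edges_cons] at hnodup
        have hmem : s(w, b) ∈ p.edges := by
          have : s(w, b) ∈ p.reverse.edges := by
            rw [hrev, SimpleGraph.Walk.edges_cons]
            exact List.mem_cons_self
          rwa [SimpleGraph.Walk.edges_reverse, List.mem_reverse] at this
        exact (List.nodup_cons.mp hnodup).1 hmem
  intro v c hc
  have hsup : c.support.toFinset.Nonempty := ⟨v, by simp⟩
  obtain ⟨u, hu, hmaxu⟩ := c.support.toFinset.exists_max_image rk hsup
  rw [List.mem_toFinset] at hu
  apply key u (c.rotate u hu) (hc.rotate hu)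
  intro y hy
  have hperm := SimpleGraph.Walk.support_rotate c u hu
  rw [SimpleGraph.Walk.support_eq_cons (c.rotate u hu), List.mem_cons] at hy
  rcases hy with rfl | hy
  · exact le_refl _
  · apply hmaxu
    rw [List.mem_toFinset]
    have : y ∈ c.support.tail := hperm.mem_iff.mp hy
    rw [SimpleGraph.Walk.support_eq_cons c]
    exact List.mem_cons_of_mem _ this

variable (k : ℕ)

abbrev WT := Sum (Fin (k+2)) (Sum (Fin (k - (k+2)/2)) Unit)

def R : WT k → WT k → Prop
  | .inl i, .inl j => (i:ℕ)+1 = j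
  | .inl i, .inr (.inl j) => (i:ℕ) = (k+2)/2 ∧ (j:ℕ) = 0
  | .inr (.inl i), .inr (.inl j) => (i:ℕ)+1 = j
  | .inl i, .inr (.inr _) => (i:ℕ) = 2
  | _, _ => False

def TG : SimpleGraph (WT k) where
  Adj u v := R k u v ∨ R k v u
  symm := ⟨fun u v h => Or.symm h⟩
  loopless := by
    constructor
    intro v h
    rcases v with i | j | u <;> rcases h with h | h <;> simp only [R] at h <;> omega

def rk : WT k → ℕ
  | .inl i => i
  | .inr (.inl j) => (k+2)/2 + 1 + j
  | .inr (.inr _) => 3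


lemma hk_facts (hk : 4 ≤ k) : 3 ≤ (k+2)/2 ∧ (k+2)/2 ≤ k - 1 ∧ 1 ≤ k - (k+2)/2 := by omega

lemma rk_ne (u v : WT k) (h : (TG k).Adj u v) : rk k u ≠ rk k v := by
  rcases u with i | j | u <;> rcases v with i' | j' | u' <;>
    rcases h with h | h <;> simp only [R] at h <;>
    simp only [rk] <;> omega

lemma rk_uniq (u v w : WT k) (hv : (TG k).Adj u v) (hw : (TG k).Adj u w)
    (hv' : rk k v < rk k u) (hw' : rk k w < rk k u) : v = w := by
  have hfin : ∀ (j j' : Fin (k - (k+2)/2)), (j:ℕ) = (j':ℕ) → (Sum.inr (Sum.inl j) : WT k) = .inr (.inl j') := by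
    intro j j' hj
    exact congrArg _ (congrArg _ (Fin.ext hj))
  have hfin2 : ∀ (j j' : Fin (k + 2)), (j:ℕ) = (j':ℕ) → (Sum.inl j : WT k) = .inl j' := by
    intro j j' hj
    exact congrArg _ (Fin.ext hj)
  rcases u with i | j | u <;> rcases v with i' | j' | u' <;> rcases w with i'' | j'' | u'' <;>
    rcases hv with hv | hv <;> rcases hw with hw | hw <;>
    simp only [R] at hv hw <;> simp only [rk] at hv' hw' <;>
    first
      | rfl
      | (exact hfin2 _ _ (by omega))
      | (exact hfin _ _ (by omega))
      | omega

lemma TG_isAcyclic : (TG k).IsAcyclic := by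
  classical
  exact acyclic_of_rank (TG k) (rk k) (rk_ne k) (rk_uniq k)

-- connectivity
lemma adj_spine (i j : Fin (k+2)) (h : (i:ℕ)+1 = (j:ℕ)) : (TG k).Adj (.inl i) (.inl j) :=
  Or.inl h

lemma adj_leg0 (hk : 4 ≤ k) : (TG k).Adj (.inl ⟨(k+2)/2, by omega⟩)
    (.inr (.inl ⟨0, by have := hk_facts k hk; omega⟩)) :=
  Or.inl ⟨rfl, rfl⟩

lemma adj_leg (j j' : Fin (k - (k+2)/2)) (h : (j:ℕ)+1 = (j':ℕ)) :
    (TG k).Adj (.inr (.inl j)) (.inr (.inl j')) := Or.inl h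

lemma adj_U (hk : 4 ≤ k) : (TG k).Adj (.inl ⟨2, by omega⟩) (.inr (.inr ())) := by
  left
  show (2:ℕ) = 2
  rfl

lemma reach_spine : ∀ (n : ℕ) (hn : n < k+2),
    (TG k).Reachable (.inl ⟨n, hn⟩) (.inl ⟨0, by omega⟩) := by
  intro n
  induction n with
  | zero => intro hn; rfl
  | succ m ih =>
    intro hn
    have hadj : (TG k).Adj (.inl ⟨m, by omega⟩) (.inl ⟨m+1, hn⟩) := adj_spine k _ _ rfl
    exact (hadj.symm.reachable).trans (ih (by omega))

lemma reach_leg (hk : 4 ≤ k) : ∀ (n : ℕ) (hn : n < k - (k+2)/2),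
    (TG k).Reachable (.inr (.inl ⟨n, hn⟩)) (.inl ⟨(k+2)/2, by omega⟩) := by
  intro n
  induction n with
  | zero => intro hn; exact (adj_leg0 k hk).symm.reachable
  | succ m ih =>
    intro hn
    have hadj : (TG k).Adj (.inr (.inl ⟨m, by omega⟩)) (.inr (.inl ⟨m+1, hn⟩)) :=
      adj_leg k _ _ rfl
    exact (hadj.symm.reachable).trans (ih (by omega))

lemma reach_all (hk : 4 ≤ k) (u : WT k) :
    (TG k).Reachable u (.inl ⟨0, by omega⟩) := by
  rcases u with i | j | u
  · have : i = ⟨(i:ℕ), i.isLt⟩ := by apply Fin.ext; rfl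
    rw [this]; exact reach_spine k i.val i.isLt
  · have : j = ⟨(j:ℕ), j.isLt⟩ := by apply Fin.ext; rfl
    rw [this]
    exact (reach_leg k hk j.val j.isLt).trans (reach_spine k ((k+2)/2) (by omega))
  · have : u = () := rfl
    rw [this]
    exact ((adj_U k hk).symm.reachable).trans (reach_spine k 2 (by omega))

lemma TG_connected (hk : 4 ≤ k) : (TG k).Connected := by
  rw [connected_iff]
  constructor
  · intro u v
    exact (reach_all k hk u).trans (reach_all k hk v).symm
  · exact ⟨.inl ⟨0, by omega⟩⟩

lemma TG_isTree (hk : 4 ≤ k) : (TG k).IsTree :=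
  ⟨TG_connected k hk, TG_isAcyclic k⟩


-- shorthand
lemma dist_adj_le {u v : WT k} (h : (TG k).Adj u v) : (TG k).dist u v ≤ 1 :=
  (SimpleGraph.dist_eq_one_iff_adj.mpr h).le

lemma spine_dist_le (hk : 4 ≤ k) : ∀ (d : ℕ) (i j : Fin (k+2)), (i:ℕ) + d = (j:ℕ) →
    (TG k).dist (.inl i) (.inl j) ≤ d := by
  intro d
  induction d with
  | zero =>
    intro i j h
    have : i = j := Fin.ext (by omega)
    subst this
    simp
  | succ m ih =>
    intro i j h
    have hij : (i:ℕ) + 1 < k + 2 := by omega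
    set i' : Fin (k+2) := ⟨(i:ℕ)+1, hij⟩ with hi'
    have h1 : (TG k).dist (.inl i) (.inl i') ≤ 1 := dist_adj_le k (adj_spine k i i' rfl)
    have h2 : (TG k).dist (.inl i') (.inl j) ≤ m := ih i' j (by simp [hi']; omega)
    calc (TG k).dist (.inl i) (.inl j)
        ≤ (TG k).dist (.inl i) (.inl i') + (TG k).dist (.inl i') (.inl j) :=
          (TG_connected k hk).dist_triangle
      _ ≤ m + 1 := by omega

lemma leg_dist_le (hk : 4 ≤ k) : ∀ (n : ℕ) (hn : n < k - (k+2)/2),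
    (TG k).dist (.inl ⟨(k+2)/2, by omega⟩) (.inr (.inl ⟨n, hn⟩)) ≤ n + 1 := by
  intro n
  induction n with
  | zero =>
    intro hn
    exact dist_adj_le k (adj_leg0 k hk)
  | succ m ih =>
    intro hn
    have h1 := ih (by omega)
    have h2 : (TG k).dist (.inr (.inl ⟨m, by omega⟩)) (.inr (.inl ⟨m+1, hn⟩)) ≤ 1 :=
      dist_adj_le k (adj_leg k _ _ rfl)
    calc (TG k).dist (.inl ⟨(k+2)/2, by omega⟩) (.inr (.inl ⟨m+1, hn⟩))
        ≤ (TG k).dist (.inl ⟨(k+2)/2, by omega⟩) (.inr (.inl ⟨m, by omega⟩))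
          + (TG k).dist (.inr (.inl ⟨m, by omega⟩)) (.inr (.inl ⟨m+1, hn⟩)) :=
          (TG_connected k hk).dist_triangle
      _ ≤ (m + 1) + 1 := by omega

def vB (hk : 4 ≤ k) : WT k := .inr (.inl ⟨k - (k+2)/2 - 1, by omega⟩)
def vU : WT k := .inr (.inr ())
def vW1 : WT k := .inl ⟨0, by omega⟩
def vW2 : WT k := .inl ⟨k+1, by omega⟩

lemma ub_B_spine (hk : 4 ≤ k) : (TG k).dist (vB k hk) (.inl ⟨(k+2)/2, by omega⟩)
    ≤ k - (k+2)/2 := by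
  rw [SimpleGraph.dist_comm]
  have := leg_dist_le k hk (k - (k+2)/2 - 1) (by omega)
  calc (TG k).dist (.inl ⟨(k+2)/2, by omega⟩) (vB k hk) ≤ (k - (k+2)/2 - 1) + 1 := this
    _ = k - (k+2)/2 := by omega

lemma ub_BW1 (hk : 4 ≤ k) : (TG k).dist (vB k hk) (vW1 k) ≤ k := by
  have h1 := ub_B_spine k hk
  have h2 : (TG k).dist (.inl ⟨(k+2)/2, by omega⟩) (vW1 k) ≤ (k+2)/2 := by
    rw [SimpleGraph.dist_comm]
    exact spine_dist_le k hk ((k+2)/2) _ _ (by simp)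
  have := (TG_connected k hk).dist_triangle (u := vB k hk)
    (v := .inl ⟨(k+2)/2, by omega⟩) (w := vW1 k)
  simp only [vB, vW1] at *
  omega

lemma ub_BW2 (hk : 4 ≤ k) : (TG k).dist (vB k hk) (vW2 k) ≤ k := by
  have h1 := ub_B_spine k hk
  have h2 : (TG k).dist (.inl ⟨(k+2)/2, by omega⟩) (vW2 k) ≤ (k+1) - (k+2)/2 :=
    spine_dist_le k hk ((k+1) - (k+2)/2) _ _ (by simp; omega)
  have := (TG_connected k hk).dist_triangle (u := vB k hk)
    (v := .inl ⟨(k+2)/2, by omega⟩) (w := vW2 k)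
  simp only [vB, vW2] at *
  omega

lemma ub_BU (hk : 4 ≤ k) : (TG k).dist (vB k hk) (vU k) ≤ k - 1 := by
  have h1 := ub_B_spine k hk
  have h2 : (TG k).dist (.inl ⟨(k+2)/2, by omega⟩) (.inl ⟨2, by omega⟩) ≤ (k+2)/2 - 2 := by
    rw [SimpleGraph.dist_comm]
    exact spine_dist_le k hk ((k+2)/2 - 2) _ _ (by simp; omega)
  have h3 : (TG k).dist (.inl ⟨2, by omega⟩) (vU k) ≤ 1 := dist_adj_le k (adj_U k hk)
  have t1 := (TG_connected k hk).dist_triangle (u := vB k hk)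
    (v := .inl ⟨(k+2)/2, by omega⟩) (w := vU k)
  have t2 := (TG_connected k hk).dist_triangle (u := (.inl ⟨(k+2)/2, by omega⟩ : WT k))
    (v := .inl ⟨2, by omega⟩) (w := vU k)
  simp only [vB, vU] at *
  omega

lemma ub_UW1 (hk : 4 ≤ k) : (TG k).dist (vU k) (vW1 k) ≤ 3 := by
  have h3 : (TG k).dist (vU k) (.inl ⟨2, by omega⟩) ≤ 1 := by
    rw [SimpleGraph.dist_comm]; exact dist_adj_le k (adj_U k hk)
  have h2 : (TG k).dist (.inl ⟨2, by omega⟩) (vW1 k) ≤ 2 := by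
    rw [SimpleGraph.dist_comm]
    exact spine_dist_le k hk 2 _ _ (by simp)
  have := (TG_connected k hk).dist_triangle (u := vU k)
    (v := .inl ⟨2, by omega⟩) (w := vW1 k)
  simp only [vU, vW1] at *
  omega

lemma ub_UW2 (hk : 4 ≤ k) : (TG k).dist (vU k) (vW2 k) ≤ k := by
  have h3 : (TG k).dist (vU k) (.inl ⟨2, by omega⟩) ≤ 1 := by
    rw [SimpleGraph.dist_comm]; exact dist_adj_le k (adj_U k hk)
  have h2 : (TG k).dist (.inl ⟨2, by omega⟩) (vW2 k) ≤ k - 1 :=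
    spine_dist_le k hk (k-1) _ _ (by simp; omega)
  have := (TG_connected k hk).dist_triangle (u := vU k)
    (v := .inl ⟨2, by omega⟩) (w := vW2 k)
  simp only [vU, vW2] at *
  omega

-- potentials for lower bounds
lemma pot_le_walk (φ : WT k → ℤ)
    (hφ : ∀ u v, (TG k).Adj u v → φ u - φ v ≤ 1 ∧ φ v - φ u ≤ 1)
    {u v : WT k} (p : (TG k).Walk u v) : φ u - φ v ≤ (p.length : ℤ) := by
  induction p with
  | nil => simp
  | @cons u w v h q ih =>
    have := (hφ u w h).1
    rw [SimpleGraph.Walk.length_cons]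
    push_cast
    omega

lemma pot_le_dist (hk : 4 ≤ k) (φ : WT k → ℤ)
    (hφ : ∀ u v, (TG k).Adj u v → φ u - φ v ≤ 1 ∧ φ v - φ u ≤ 1)
    (u v : WT k) : φ u - φ v ≤ ((TG k).dist u v : ℤ) := by
  obtain ⟨p, hp⟩ := (TG_connected k hk).exists_walk_length_eq_dist u v
  rw [← hp]
  exact pot_le_walk k φ hφ p

lemma potA : ∀ u v, (TG k).Adj u v →
    ((rk k u : ℤ)) - (rk k v : ℤ) ≤ 1 ∧ ((rk k v : ℤ)) - (rk k u : ℤ) ≤ 1 := by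
  intro u v h
  rcases u with i | j | u <;> rcases v with i' | j' | u' <;>
    rcases h with h | h <;> simp only [R] at h <;> simp only [rk] <;> push_cast <;> omega

lemma lb_W1W2 (hk : 4 ≤ k) : k + 1 ≤ (TG k).dist (vW1 k) (vW2 k) := by
  have := pot_le_dist k hk (fun w => (rk k w : ℤ)) (potA k) (vW2 k) (vW1 k)
  rw [SimpleGraph.dist_comm] at this
  simp only [vW1, vW2, rk] at this ⊢
  omega

lemma lb_BW1 (hk : 4 ≤ k) : k ≤ (TG k).dist (vB k hk) (vW1 k) := by
  have := pot_le_dist k hk (fun w => (rk k w : ℤ)) (potA k) (vB k hk) (vW1 k)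
  simp only [vB, vW1, rk] at this ⊢
  omega

def potBf : WT k → ℤ
  | .inl i => if (i:ℕ) ≤ 2 then (2 - (i:ℕ) : ℤ) else ((i:ℕ) - 2 : ℤ)
  | .inr (.inl j) => ((k+2)/2 : ℤ) - 1 + (j:ℕ)
  | .inr (.inr _) => -1

def potCf : WT k → ℤ
  | .inl i => (k+1 : ℤ) - (i:ℕ)
  | .inr (.inl j) => (k+2 : ℤ) - ((k+2)/2 : ℕ) + (j:ℕ)
  | .inr (.inr _) => k

lemma potB (hk : 4 ≤ k) : ∀ u v, (TG k).Adj u v →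
    (potBf k u) - (potBf k v) ≤ 1 ∧ (potBf k v) - (potBf k u) ≤ 1 := by
  intro u v h
  rcases u with i | j | u <;> rcases v with i' | j' | u' <;>
    rcases h with h | h <;> simp only [R] at h <;> simp only [potBf] <;>
    (try split_ifs) <;> push_cast <;> omega

lemma lb_BU (hk : 4 ≤ k) : k - 1 ≤ (TG k).dist (vB k hk) (vU k) := by
  have := pot_le_dist k hk (potBf k) (potB k hk) (vB k hk) (vU k)
  simp only [vB, vU, potBf] at this ⊢
  omega

lemma potC (hk : 4 ≤ k) : ∀ u v, (TG k).Adj u v →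
    (potCf k u) - (potCf k v) ≤ 1 ∧ (potCf k v) - (potCf k u) ≤ 1 := by
  intro u v h
  rcases u with i | j | u <;> rcases v with i' | j' | u' <;>
    rcases h with h | h <;> simp only [R] at h <;> simp only [potCf] <;> push_cast <;> omega

lemma lb_BW2 (hk : 4 ≤ k) : k - 1 ≤ (TG k).dist (vB k hk) (vW2 k) := by
  have := pot_le_dist k hk (potCf k) (potC k hk) (vB k hk) (vW2 k)
  simp only [vB, vW2, potCf] at this ⊢
  omega


lemma not_leaf_of_two (w u1 u2 : WT k) (h1 : (TG k).Adj w u1) (h2 : (TG k).Adj w u2)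
    (hne : u1 ≠ u2) : ¬ ∃! u, (TG k).Adj w u :=
  fun ⟨u, _, hu⟩ => hne ((hu u1 h1).trans (hu u2 h2).symm)

lemma leaf_W1 (hk : 4 ≤ k) : ∃! u, (TG k).Adj (vW1 k) u := by
  have h3 := hk_facts k hk
  refine ⟨.inl ⟨1, by omega⟩, adj_spine k _ _ (by simp [vW1]), ?_⟩
  intro u hu
  rcases u with i | j | u <;> rcases hu with h | h <;> simp only [vW1, R] at h <;>
    first
      | (exact congrArg _ (Fin.ext (by simp at h ⊢; all_goals omega)))
      | (exact h.elim)
      | (exfalso; simp at h; all_goals omega)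
      | (exfalso; omega)

lemma leaf_W2 (hk : 4 ≤ k) : ∃! u, (TG k).Adj (vW2 k) u := by
  have h3 := hk_facts k hk
  refine ⟨.inl ⟨k, by omega⟩, Or.inr (by show (k:ℕ)+1 = k+1; rfl), ?_⟩
  intro u hu
  rcases u with i | j | u <;> rcases hu with h | h <;> simp only [vW2, R] at h <;>
    first
      | (exact congrArg _ (Fin.ext (by simp at h ⊢; have := i.isLt; all_goals omega)))
      | (exact h.elim)
      | (exfalso; simp at h; all_goals omega)
      | (exfalso; omega)

lemma leaf_U (hk : 4 ≤ k) : ∃! u, (TG k).Adj (vU k) u := by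
  have h3 := hk_facts k hk
  refine ⟨.inl ⟨2, by omega⟩, (adj_U k hk).symm, ?_⟩
  intro u hu
  rcases u with i | j | u <;> rcases hu with h | h <;> simp only [vU, R] at h <;>
    first
      | (exact congrArg _ (Fin.ext (by simp at h ⊢; all_goals omega)))
      | (exact h.elim)
      | (exfalso; simp at h; all_goals omega)
      | (exfalso; omega)

lemma leaf_B (hk : 4 ≤ k) : ∃! u, (TG k).Adj (vB k hk) u := by
  have h3 := hk_facts k hk
  by_cases ha : k - (k+2)/2 = 1
  · refine ⟨.inl ⟨(k+2)/2, by omega⟩, ?_, ?_⟩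
    · right
      show ((k+2)/2 : ℕ) = (k+2)/2 ∧ ((⟨k - (k+2)/2 - 1, _⟩ : Fin _) : ℕ) = 0
      refine ⟨rfl, ?_⟩
      show k - (k+2)/2 - 1 = 0
      omega
    · intro u hu
      rcases u with i | j | u <;> rcases hu with h | h <;> simp only [vB, R] at h <;>
        first
          | (exact congrArg _ (Fin.ext (by simp at h ⊢; all_goals omega)))
          | (exact h.elim)
          | (exfalso; have h4 := j.isLt; simp at h; all_goals omega)
          | (exfalso; have h4 := j.isLt; omega)
          | (exfalso; simp at h; all_goals omega)
          | (exfalso; omega)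
  · refine ⟨.inr (.inl ⟨k - (k+2)/2 - 2, by omega⟩), ?_, ?_⟩
    · right
      show (k - (k+2)/2 - 2 : ℕ) + 1 = ((⟨k - (k+2)/2 - 1, _⟩ : Fin _) : ℕ)
      show k - (k+2)/2 - 2 + 1 = k - (k+2)/2 - 1
      omega
    · intro u hu
      rcases u with i | j | u <;> rcases hu with h | h <;> simp only [vB, R] at h <;>
        first
          | (exact congrArg _ (congrArg _ (Fin.ext (by simp at h ⊢; have h4 := j.isLt; all_goals omega))))
          | (exact h.elim)
          | (exfalso; have h4 := j.isLt; simp at h; all_goals omega)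
          | (exfalso; have h4 := j.isLt; omega)
          | (exfalso; simp at h; all_goals omega)
          | (exfalso; omega)

def fmap (hk : 4 ≤ k) : Fin 4 → WT k
  | 0 => vB k hk
  | 1 => vU k
  | 2 => vW1 k
  | 3 => vW2 k

lemma fmap_inj (hk : 4 ≤ k) : Function.Injective (fmap k hk) := by
  intro v v' h
  fin_cases v <;> fin_cases v' <;>
    first
      | rfl
      | (exfalso; simp [fmap, vB, vU, vW1, vW2] at h; done)
      | (exfalso; simp [fmap, vW1, vW2, Fin.ext_iff] at h; all_goals omega; done)

lemma leaf_iff (hk : 4 ≤ k) (w : WT k) :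
    (∃ v, fmap k hk v = w) ↔ ∃! u, (TG k).Adj w u := by
  have h3 := hk_facts k hk
  constructor
  · rintro ⟨v, rfl⟩
    fin_cases v
    · exact leaf_B k hk
    · exact leaf_U k hk
    · exact leaf_W1 k hk
    · exact leaf_W2 k hk
  · intro hw
    rcases w with i | j | u
    · by_cases h0 : (i:ℕ) = 0
      · refine ⟨2, ?_⟩
        show vW1 k = .inl i
        exact congrArg _ (Fin.ext (show (0:ℕ) = (i:ℕ) from h0.symm))
      · by_cases htop : (i:ℕ) = k+1
        · refine ⟨3, ?_⟩
          show vW2 k = .inl i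
          exact congrArg _ (Fin.ext (show (k+1:ℕ) = (i:ℕ) from htop.symm))
        · exfalso
          have hi := i.isLt
          refine not_leaf_of_two k (.inl i) (.inl ⟨(i:ℕ)-1, by omega⟩)
            (.inl ⟨(i:ℕ)+1, by omega⟩)
            (Or.inr (show ((i:ℕ)-1) + 1 = (i:ℕ) by omega))
            (Or.inl (show (i:ℕ) + 1 = ((i:ℕ)+1) from rfl))
            (fun hc => ?_) hw
          have := congrArg (fun z => match z with | Sum.inl y => (y:ℕ) | _ => 0) hc
          simp at this
          all_goals omega
    · by_cases hlast : (j:ℕ) = k - (k+2)/2 - 1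
      · refine ⟨0, ?_⟩
        show vB k hk = .inr (.inl j)
        exact congrArg _ (congrArg _ (Fin.ext
          (show k - (k+2)/2 - 1 = (j:ℕ) from hlast.symm)))
      · exfalso
        have hj := j.isLt
        by_cases h0 : (j:ℕ) = 0
        · refine not_leaf_of_two k (.inr (.inl j)) (.inl ⟨(k+2)/2, by omega⟩)
            (.inr (.inl ⟨(j:ℕ)+1, by omega⟩))
            (Or.inr (show ((k+2)/2 : ℕ) = (k+2)/2 ∧ (j:ℕ) = 0 from ⟨rfl, h0⟩))
            (Or.inl (show (j:ℕ) + 1 = ((j:ℕ)+1) from rfl))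
            (fun hc => by simp at hc) hw
        · refine not_leaf_of_two k (.inr (.inl j)) (.inr (.inl ⟨(j:ℕ)-1, by omega⟩))
            (.inr (.inl ⟨(j:ℕ)+1, by omega⟩))
            (Or.inr (show ((j:ℕ)-1) + 1 = (j:ℕ) by omega))
            (Or.inl (show (j:ℕ) + 1 = ((j:ℕ)+1) from rfl))
            (fun hc => ?_) hw
          have := congrArg (fun z => match z with | Sum.inr (Sum.inl y) => (y:ℕ) | _ => 0) hc
          simp at this
          all_goals omega
    · exact ⟨1, rfl⟩

end Cater

theorem bottom_gadget_exists (k : ℕ) (hk : 4 ≤ k) :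
    ∃ (V : Type), Finite V ∧ ∃ (Bot : SimpleGraph V) (b : V),
      (∀ (W : Type) (T : SimpleGraph W) (f : V → W),
        IsLeafRoot Bot k T f → mval T f b ≤ k - 1) ∧
      (∃ (W : Type) (T : SimpleGraph W) (f : V → W),
        IsLeafRoot Bot k T f ∧ mval T f b = k - 1) := by
  classical
  refine ⟨Fin 4, inferInstance, LeafAux.BotG, 0, ?_, ?_⟩
  · intro W T f h
    exact LeafAux.part1 k hk W T f h
  · -- explicit caterpillar root
    have h3 := Cater.hk_facts k hk
    have f0 : Cater.fmap k hk 0 = Cater.vB k hk := rfl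
    have f1 : Cater.fmap k hk 1 = Cater.vU k := rfl
    have f2 : Cater.fmap k hk 2 = Cater.vW1 k := rfl
    have f3 : Cater.fmap k hk 3 = Cater.vW2 k := rfl
    have hBU : (Cater.TG k).dist (Cater.vU k) (Cater.vB k hk) = k - 1 := by
      rw [SimpleGraph.dist_comm]
      exact le_antisymm (Cater.ub_BU k hk) (Cater.lb_BU k hk)
    refine ⟨Cater.WT k, Cater.TG k, Cater.fmap k hk,
      ⟨inferInstance, Cater.TG_isTree k hk, Cater.fmap_inj k hk,
        fun w => Cater.leaf_iff k hk w, ?_⟩, ?_⟩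
    · -- adjacency iff distance at most k
      intro u v huv
      have dc := @SimpleGraph.dist_comm (Cater.WT k) (Cater.TG k)
      fin_cases u <;> fin_cases v
      · exact absurd rfl huv
      · refine iff_of_true (LeafAux.botAdj _ _ (by decide) (by decide) (by decide)) ?_
        show (Cater.TG k).dist (Cater.vB k hk) (Cater.vU k) ≤ k
        have := Cater.ub_BU k hk; omega
      · refine iff_of_true (LeafAux.botAdj _ _ (by decide) (by decide) (by decide)) ?_
        show (Cater.TG k).dist (Cater.vB k hk) (Cater.vW1 k) ≤ k
        exact Cater.ub_BW1 k hk
      · refine iff_of_true (LeafAux.botAdj _ _ (by decide) (by decide) (by decide)) ?_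
        show (Cater.TG k).dist (Cater.vB k hk) (Cater.vW2 k) ≤ k
        exact Cater.ub_BW2 k hk
      · refine iff_of_true (LeafAux.botAdj _ _ (by decide) (by decide) (by decide)) ?_
        show (Cater.TG k).dist (Cater.vU k) (Cater.vB k hk) ≤ k
        rw [SimpleGraph.dist_comm]
        have := Cater.ub_BU k hk; omega
      · exact absurd rfl huv
      · refine iff_of_true (LeafAux.botAdj _ _ (by decide) (by decide) (by decide)) ?_
        show (Cater.TG k).dist (Cater.vU k) (Cater.vW1 k) ≤ k
        have := Cater.ub_UW1 k hk; omega
      · refine iff_of_true (LeafAux.botAdj _ _ (by decide) (by decide) (by decide)) ?_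
        show (Cater.TG k).dist (Cater.vU k) (Cater.vW2 k) ≤ k
        exact Cater.ub_UW2 k hk
      · refine iff_of_true (LeafAux.botAdj _ _ (by decide) (by decide) (by decide)) ?_
        show (Cater.TG k).dist (Cater.vW1 k) (Cater.vB k hk) ≤ k
        rw [SimpleGraph.dist_comm]
        exact Cater.ub_BW1 k hk
      · refine iff_of_true (LeafAux.botAdj _ _ (by decide) (by decide) (by decide)) ?_
        show (Cater.TG k).dist (Cater.vW1 k) (Cater.vU k) ≤ k
        rw [SimpleGraph.dist_comm]
        have := Cater.ub_UW1 k hk; omega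
      · exact absurd rfl huv
      · refine iff_of_false (fun hadj => hadj.2.1 ⟨rfl, rfl⟩) (fun hd => ?_)
        have h' : (Cater.TG k).dist (Cater.vW1 k) (Cater.vW2 k) ≤ k := hd
        have := Cater.lb_W1W2 k hk; omega
      · refine iff_of_true (LeafAux.botAdj _ _ (by decide) (by decide) (by decide)) ?_
        show (Cater.TG k).dist (Cater.vW2 k) (Cater.vB k hk) ≤ k
        rw [SimpleGraph.dist_comm]
        exact Cater.ub_BW2 k hk
      · refine iff_of_true (LeafAux.botAdj _ _ (by decide) (by decide) (by decide)) ?_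
        show (Cater.TG k).dist (Cater.vW2 k) (Cater.vU k) ≤ k
        rw [SimpleGraph.dist_comm]
        exact Cater.ub_UW2 k hk
      · refine iff_of_false (fun hadj => hadj.2.2 ⟨rfl, rfl⟩) (fun hd => ?_)
        have h' : (Cater.TG k).dist (Cater.vW2 k) (Cater.vW1 k) ≤ k := hd
        rw [SimpleGraph.dist_comm] at h'
        have := Cater.lb_W1W2 k hk; omega
      · exact absurd rfl huv
    · -- mval equals k - 1
      have hmem : (k-1) ∈ {d | ∃ u, u ≠ (0 : Fin 4) ∧
          (Cater.TG k).dist (Cater.fmap k hk u) (Cater.fmap k hk 0) = d} :=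
        ⟨1, by decide, by rw [f1, f0]; exact hBU⟩
      refine le_antisymm (Nat.sInf_le hmem) (le_csInf ⟨_, hmem⟩ ?_)
      rintro d ⟨u, hu, hd⟩
      fin_cases u
      · exact absurd rfl hu
      · have h' : (Cater.TG k).dist (Cater.vU k) (Cater.vB k hk) = d := hd
        omega
      · have h' : (Cater.TG k).dist (Cater.vW1 k) (Cater.vB k hk) = d := hd
        rw [SimpleGraph.dist_comm] at h'
        have := Cater.lb_BW1 k hk; omega
      · have h' : (Cater.TG k).dist (Cater.vW2 k) (Cater.vB k hk) = d := hd
        rw [SimpleGraph.dist_comm] at h'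
        have := Cater.lb_BW2 k hk; omega
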